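/- Let a, b, c, d ∈ ℤ satisfy ac + bd = 0, with (a,b) ≠ (0,0) and (c,d) ≠ (0,0). Then there exist unique integers p, q, m, n with gcd(p,q) = 1, q > 0 and p ≠ 0 such that a = m·p, b = −n·p, c = n·q and d = m·q; equivalently, (a,b,c,d) = m·(p,0,0,q) + n·(0,−p,q,0). -/

import Mathlib

private lemma iso_uniq (a b : ℤ) (hab : ¬(a = 0 ∧ b = 0))
    {p q m n p' q' m' n' : ℤ}
    (hg : Int.gcd p q = 1) (hq : 0 < q)
    (ha : a = m * p) (hb : b = -(n * p)) (hc' : ∀ c, c = n * q → c = n' * q')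
    (hg' : Int.gcd p' q' = 1) (hq' : 0 < q')
    (ha' : a = m' * p') (hb' : b = -(n' * p'))
    (e2 : m * q = m' * q') (e4 : n * q = n' * q') :
    p = p' ∧ q = q' ∧ m = m' ∧ n = n' := by
  have e1 : m * p = m' * p' := ha ▸ ha'
  have e3 : n * p = n' * p' := by
    have := hb ▸ hb'
    linarith
  have km : m * (p * q' - p' * q) = 0 := by linear_combination q' * e1 - p' * e2
  have kn : n * (p * q' - p' * q) = 0 := by linear_combination q' * e3 - p' * e4
  have hkey : p * q' = p' * q := by
    by_contra hne
    have hne' : p * q' - p' * q ≠ 0 := fun h0 => hne (by linarith)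
    have hm0 : m = 0 := (mul_eq_zero.mp km).resolve_right hne'
    have hn0 : n = 0 := (mul_eq_zero.mp kn).resolve_right hne'
    exact hab ⟨by simp [ha, hm0], by simp [hb, hn0]⟩
  have hcop : IsCoprime q p := (Int.isCoprime_iff_gcd_eq_one.mpr hg).symm
  have hcop2 : IsCoprime q' p' := (Int.isCoprime_iff_gcd_eq_one.mpr hg').symm
  have hqq' : q = q' := by
    have d1 : q ∣ q' := hcop.dvd_of_dvd_mul_left ⟨p', by linarith [hkey]⟩
    have d2 : q' ∣ q := hcop2.dvd_of_dvd_mul_left ⟨p, by linarith [hkey]⟩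
    exact Int.dvd_antisymm hq.le hq'.le d1 d2
  subst hqq'
  have hqne : q ≠ 0 := hq.ne'
  refine ⟨mul_right_cancel₀ hqne hkey, rfl, mul_right_cancel₀ hqne e2,
    mul_right_cancel₀ hqne e4⟩

theorem isotropic_classification (a b c d : ℤ) (h : a * c + b * d = 0)
    (hab : ¬(a = 0 ∧ b = 0)) (hcd : ¬(c = 0 ∧ d = 0)) :
    ∃! x : ℤ × ℤ × ℤ × ℤ,
      Int.gcd x.1 x.2.1 = 1 ∧ 0 < x.2.1 ∧ x.1 ≠ 0 ∧
      a = x.2.2.1 * x.1 ∧ b = -(x.2.2.2 * x.1) ∧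
      c = x.2.2.2 * x.2.1 ∧ d = x.2.2.1 * x.2.1 := by
  -- first gcd
  have hgn : Int.gcd d c ≠ 0 := fun h0 =>
    hcd ⟨(Int.gcd_eq_zero_iff.mp h0).2, (Int.gcd_eq_zero_iff.mp h0).1⟩
  have hg1pos : 0 < (Int.gcd d c : ℤ) := by exact_mod_cast Nat.pos_of_ne_zero hgn
  obtain ⟨m0, hdg⟩ : ((Int.gcd d c : ℤ)) ∣ d := Int.gcd_dvd_left d c
  obtain ⟨n0, hcg⟩ : ((Int.gcd d c : ℤ)) ∣ c := Int.gcd_dvd_right d c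
  have hm0eq : m0 = d / (Int.gcd d c : ℤ) := by
    have h1 : (Int.gcd d c : ℤ) * m0 / (Int.gcd d c : ℤ) = m0 :=
      Int.mul_ediv_cancel_left _ hg1pos.ne'
    rw [← hdg] at h1; exact h1.symm
  have hn0eq : n0 = c / (Int.gcd d c : ℤ) := by
    have h1 : (Int.gcd d c : ℤ) * n0 / (Int.gcd d c : ℤ) = n0 :=
      Int.mul_ediv_cancel_left _ hg1pos.ne'
    rw [← hcg] at h1; exact h1.symm
  have hcop0 : Int.gcd m0 n0 = 1 := by
    rw [hm0eq, hn0eq]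
    exact Int.gcd_div_gcd_div_gcd (Nat.pos_of_ne_zero hgn)
  -- parallelism
  have hpar : a * n0 + b * m0 = 0 := by
    have h2 : (Int.gcd d c : ℤ) * (a * n0 + b * m0) = 0 := by
      linear_combination h - a * hcg - b * hdg
    exact (mul_eq_zero.mp h2).resolve_left hg1pos.ne'
  -- Bezout
  obtain ⟨x, y, hxy⟩ : ∃ x y : ℤ, m0 * x + n0 * y = 1 := by
    refine ⟨Int.gcdA m0 n0, Int.gcdB m0 n0, ?_⟩
    have := Int.gcd_eq_gcd_ab m0 n0
    rw [hcop0] at this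
    exact_mod_cast this.symm
  obtain ⟨α, hαdef⟩ : ∃ α : ℤ, α = a * x + (-b) * y := ⟨_, rfl⟩
  have haα : a = α * m0 := by rw [hαdef]; linear_combination (-a) * hxy + y * hpar
  have hbα : -b = α * n0 := by rw [hαdef]; linear_combination b * hxy - x * hpar
  have hαne : α ≠ 0 := by
    intro h0
    rw [h0, zero_mul] at haα hbα
    exact hab ⟨haα, by linarith⟩
  -- second gcd
  have hg2n : Int.gcd α (Int.gcd d c : ℤ) ≠ 0 := fun h0 =>
    hαne (Int.gcd_eq_zero_iff.mp h0).1
  have hg2pos : 0 < (Int.gcd α (Int.gcd d c : ℤ) : ℤ) := by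
    exact_mod_cast Nat.pos_of_ne_zero hg2n
  obtain ⟨p, hαg⟩ : ((Int.gcd α (Int.gcd d c : ℤ) : ℤ)) ∣ α := Int.gcd_dvd_left α (Int.gcd d c : ℤ)
  obtain ⟨q, hg1g⟩ : ((Int.gcd α (Int.gcd d c : ℤ) : ℤ)) ∣ (Int.gcd d c : ℤ) :=
    Int.gcd_dvd_right α (Int.gcd d c : ℤ)
  have hpeq : p = α / (Int.gcd α (Int.gcd d c : ℤ) : ℤ) := by
    have h1 : (Int.gcd α (Int.gcd d c : ℤ) : ℤ) * p / (Int.gcd α (Int.gcd d c : ℤ) : ℤ) = p :=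
      Int.mul_ediv_cancel_left _ hg2pos.ne'
    rw [← hαg] at h1; exact h1.symm
  have hqeq : q = (Int.gcd d c : ℤ) / (Int.gcd α (Int.gcd d c : ℤ) : ℤ) := by
    have h1 : (Int.gcd α (Int.gcd d c : ℤ) : ℤ) * q / (Int.gcd α (Int.gcd d c : ℤ) : ℤ) = q :=
      Int.mul_ediv_cancel_left _ hg2pos.ne'
    rw [← hg1g] at h1; exact h1.symm
  have hcoppq : Int.gcd p q = 1 := by
    rw [hpeq, hqeq]
    exact Int.gcd_div_gcd_div_gcd (Nat.pos_of_ne_zero hg2n)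
  have hqpos : 0 < q := by
    by_contra h0
    push_neg at h0
    nlinarith [hg1g ▸ hg1pos]
  have hpne : p ≠ 0 := by
    intro h0
    rw [h0, mul_zero] at hαg
    exact hαne hαg
  set G : ℤ := (Int.gcd α (Int.gcd d c : ℤ) : ℤ) with hGdef
  have hA : a = (G * m0) * p := by rw [haα, hαg]; ring
  have hB : b = -((G * n0) * p) := by
    have : -b = (G * n0) * p := by rw [hbα, hαg]; ring
    linarith
  have hC : c = (G * n0) * q := by rw [hcg, hg1g]; ring
  have hD : d = (G * m0) * q := by rw [hdg, hg1g]; ring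
  refine ⟨(p, q, G * m0, G * n0), ⟨hcoppq, hqpos, hpne, hA, hB, hC, hD⟩, ?_⟩
  rintro ⟨p', q', m', n'⟩ ⟨hg', hq', hp', ha', hb', hc', hd'⟩
  simp only at hg' hq' hp' ha' hb' hc' hd'
  obtain ⟨e1, e2, e3, e4⟩ := iso_uniq a b hab hg' hq' ha' hb'
    (fun c0 h0 => h0.trans (by linarith [hC, hc'])) hcoppq hqpos hA hB
    (by rw [← hd', hD]) (by rw [← hc', hC])
  simp only [Prod.mk.injEq]
  exact ⟨e1, e2, e3, e4⟩
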